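/- With sufficiently strong negative externalities the long-run equilibrium minimizes aggregate consumption: let σ > 1 and η < β − 1 (so θ := (1−β+η)(σ−1)/ρ < 0 and η(σ−1) < 1 holds automatically). Then for every firm distribution μ that is strictly positive almost everywhere, X_η(μ) ≥ X_η(μ^EQ_η), where μ^EQ_η(i) := A₀(i)^{(σ−1)/(1−η(σ−1))} / ∫₀ⁿ A₀(j)^{(σ−1)/(1−η(σ−1))} dj; i.e. the decentralized long-run equilibrium distribution minimizes X_η over strictly positive firm distributions. -/

import Mathlib

open MeasureTheory Set Real
open scoped ENNReal

lemma bern_neg {θ : ℝ} (hθ : θ < 0) {t : ℝ} (ht : 0 < t) :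
    1 + θ * (t - 1) ≤ t ^ θ := by
  have h1θ : 0 < 1 - θ := by linarith
  have hw : (1:ℝ)/(1-θ) + (-θ)/(1-θ) = 1 := by field_simp; ring
  have hgm := Real.geom_mean_le_arith_mean2_weighted
    (by positivity) (div_nonneg (neg_nonneg.2 hθ.le) h1θ.le)
    (Real.rpow_nonneg ht.le θ) ht.le hw
  have hgeq : (t ^ θ) ^ ((1:ℝ)/(1-θ)) * t ^ (-θ/(1-θ)) = 1 := by
    rw [← Real.rpow_mul ht.le, ← Real.rpow_add ht,
      show θ * (1/(1-θ)) + -θ/(1-θ) = 0 by field_simp; ring]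
    exact Real.rpow_zero t
  rw [hgeq] at hgm
  have h2 := mul_le_mul_of_nonneg_left hgm h1θ.le
  have ht1 : (1-θ) * (1/(1-θ) * t^θ + -θ/(1-θ) * t) = t^θ - θ*t := by
    field_simp; ring
  rw [ht1, mul_one] at h2
  linarith

lemma tangent_neg {θ : ℝ} (hθ : θ < 0) {x y : ℝ} (hx : 0 < x) (hy : 0 < y) :
    y ^ θ + θ * y ^ (θ - 1) * (x - y) ≤ x ^ θ := by
  have ht := bern_neg hθ (div_pos hx hy)
  have hyθ : 0 < y ^ θ := Real.rpow_pos_of_pos hy θ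
  rw [Real.div_rpow hx.le hy.le] at ht
  have h2 := mul_le_mul_of_nonneg_left ht hyθ.le
  rw [mul_div_cancel₀ _ hyθ.ne'] at h2
  have h4 : y ^ (θ - 1) = y ^ θ / y := by
    rw [Real.rpow_sub hy, Real.rpow_one]
  rw [h4]
  have h5 : y ^ θ + θ * (y ^ θ / y) * (x - y) = y ^ θ * (1 + θ * (x / y - 1)) := by
    field_simp
  rw [h5]; exact h2

lemma calc_pow {A S c q r θ : ℝ} (hA : 0 < A) (hS : 0 < S)
    (hθ : θ = c * q) (hqr : q = r * (1 - θ)) :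
    (A * (A ^ r / S) ^ c) ^ q = S ^ (-θ) * A ^ r := by
  have h1 : (0:ℝ) < A ^ r / S := div_pos (rpow_pos_of_pos hA r) hS
  have h2 : (0:ℝ) < A ^ r := rpow_pos_of_pos hA r
  rw [Real.rpow_def_of_pos (mul_pos hA (rpow_pos_of_pos h1 c)),
      Real.log_mul hA.ne' (rpow_pos_of_pos h1 c).ne',
      Real.log_rpow h1, Real.log_div h2.ne' hS.ne', Real.log_rpow hA,
      Real.rpow_def_of_pos hS, Real.rpow_def_of_pos hA, ← Real.exp_add]
  congr 1
  linear_combination Real.log A * hqr + (Real.log S - r * Real.log A) * hθ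

lemma calc_pow2 {A x c q θ : ℝ} (hA : 0 < A) (hx : 0 < x) (hθ : θ = c * q) :
    (A * x ^ c) ^ q = A ^ q * x ^ θ := by
  rw [Real.rpow_def_of_pos (mul_pos hA (rpow_pos_of_pos hx c)),
      Real.log_mul hA.ne' (rpow_pos_of_pos hx c).ne', Real.log_rpow hx,
      Real.rpow_def_of_pos hA, Real.rpow_def_of_pos hx, ← Real.exp_add]
  congr 1
  linear_combination (-Real.log x) * hθ

lemma calc_pow3 {A S q r θ : ℝ} (hA : 0 < A) (hS : 0 < S)
    (hqr : q = r * (1 - θ)) :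
    A ^ q * (A ^ r / S) ^ (θ - 1) = S ^ (1 - θ) := by
  have h1 : (0:ℝ) < A ^ r / S := div_pos (rpow_pos_of_pos hA r) hS
  have h2 : (0:ℝ) < A ^ r := rpow_pos_of_pos hA r
  rw [Real.rpow_def_of_pos hA, Real.rpow_def_of_pos h1,
      Real.log_div h2.ne' hS.ne', Real.log_rpow hA, Real.rpow_def_of_pos hS,
      ← Real.exp_add]
  congr 1
  linear_combination Real.log A * hqr

set_option maxHeartbeats 2000000 in
/-- With sufficiently strong negative externalities
(σ > 1 and η < β - 1, so θ := (1-β+η)(σ-1)/ρ < 0 and η(σ-1) < 1 holds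
automatically) the long-run equilibrium minimizes aggregate consumption:
`X_η μ ≥ X_η μEQη` for every a.e. strictly positive firm distribution μ,
where aggregate consumption is defined with `ℝ≥0∞` values to allow for an
infinite defining integral. -/
theorem statement11
    (n β σ ρ η θ a b : ℝ)
    (hn : 0 < n) (hβ : β ∈ Set.Ioo (0:ℝ) 1) (hσ : 1 < σ)
    (hρ : ρ = σ * (1 - β) + β)
    (hη : η < β - 1)
    (hθ : θ = (1 - β + η) * (σ - 1) / ρ)
    (A₀ : ℝ → ℝ) (hA₀meas : Measurable A₀)
    (ha : 0 < a)
    (hA₀a : ∀ i ∈ Set.Icc (0:ℝ) n, a ≤ A₀ i)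
    (hA₀b : ∀ i ∈ Set.Icc (0:ℝ) n, A₀ i ≤ b)
    (Xη : (ℝ → ℝ) → ℝ≥0∞)
    (hXη : ∀ μ : ℝ → ℝ,
      Xη μ = (∫⁻ j in Set.Icc (0:ℝ) n,
        ENNReal.ofReal ((A₀ j * μ j ^ (1 - β + η)) ^ ((σ - 1) / ρ))) ^ (ρ / (σ - 1)))
    (μEQ : ℝ → ℝ)
    (hμEQ : ∀ i, μEQ i = A₀ i ^ ((σ - 1) / (1 - η * (σ - 1))) /
      ∫ j in Set.Icc (0:ℝ) n, A₀ j ^ ((σ - 1) / (1 - η * (σ - 1)))) :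
    θ < 0 ∧ η * (σ - 1) < 1 ∧
    ∀ μ : ℝ → ℝ, Measurable μ → (∀ i ∈ Set.Icc (0:ℝ) n, 0 ≤ μ i) →
      (∫ i in Set.Icc (0:ℝ) n, μ i) = 1 →
      (∀ᵐ i ∂(volume.restrict (Set.Icc (0:ℝ) n)), 0 < μ i) →
      Xη μEQ ≤ Xη μ := by
  obtain ⟨hβ0, hβ1⟩ := hβ
  have hσ1 : (0:ℝ) < σ - 1 := by linarith
  have hρpos : 0 < ρ := by nlinarith
  have hθneg : θ < 0 := by
    rw [hθ]; apply div_neg_of_neg_of_pos _ hρpos; nlinarith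
  have hησ : η * (σ - 1) < 1 := by nlinarith
  refine ⟨hθneg, hησ, ?_⟩
  intro μ hμmeas hμnn hμint hμpos
  set c : ℝ := 1 - β + η with hc
  set q : ℝ := (σ - 1) / ρ with hq
  set r : ℝ := (σ - 1) / (1 - η * (σ - 1)) with hr
  have hd : (0:ℝ) < 1 - η * (σ - 1) := by linarith
  have hrpos : 0 < r := div_pos hσ1 hd
  have hθeq : θ = c * q := by rw [hθ, hq, hc]; ring
  have h1θ : 1 - θ = (1 - η * (σ - 1)) / ρ := by
    rw [hθ]
    field_simp
    linear_combination hρ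
  have hqr : q = r * (1 - θ) := by
    rw [hq, hr, h1θ]
    field_simp
    exact (div_self (ne_of_gt (by nlinarith))).symm
  set S : ℝ := ∫ j in Icc (0:ℝ) n, A₀ j ^ r with hS
  have hmeasAr : Measurable fun j => A₀ j ^ r := by measurability
  have hfinvol : volume (Icc (0:ℝ) n) < ⊤ := measure_Icc_lt_top
  have intAr : IntegrableOn (fun j => A₀ j ^ r) (Icc (0:ℝ) n) := by
    apply Measure.integrableOn_of_bounded (M := b ^ r) hfinvol.ne hmeasAr.aestronglyMeasurable
    filter_upwards [ae_restrict_mem measurableSet_Icc] with i hi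
    have hAi : 0 < A₀ i := ha.trans_le (hA₀a i hi)
    rw [Real.norm_eq_abs, abs_of_nonneg (Real.rpow_nonneg hAi.le r)]
    exact Real.rpow_le_rpow hAi.le (hA₀b i hi) hrpos.le
  have hconst : IntegrableOn (fun _ : ℝ => a ^ r) (Icc (0:ℝ) n) volume :=
    integrableOn_const hfinvol.ne
  have hSpos : 0 < S := by
    have hle : a ^ r * n ≤ S := by
      have hm := setIntegral_mono_on hconst intAr measurableSet_Icc
        (fun i hi => Real.rpow_le_rpow ha.le (hA₀a i hi) hrpos.le)
      simpa [Real.volume_Icc, ENNReal.toReal_ofReal hn.le, mul_comm, max_eq_left hn.le] using hm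
    nlinarith [Real.rpow_pos_of_pos ha r]
  -- reduce to lintegral comparison
  rw [hXη, hXη]
  apply ENNReal.rpow_le_rpow _ (le_of_lt (div_pos hρpos hσ1))
  -- equilibrium side value
  have hEQval : (∫⁻ j in Icc (0:ℝ) n, ENNReal.ofReal ((A₀ j * μEQ j ^ c) ^ q))
      = ENNReal.ofReal (S ^ (1 - θ)) := by
    have hcongr : (fun j => ENNReal.ofReal ((A₀ j * μEQ j ^ c) ^ q))
        =ᵐ[volume.restrict (Icc (0:ℝ) n)]
        (fun j => ENNReal.ofReal (S ^ (-θ) * A₀ j ^ r)) := by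
      filter_upwards [ae_restrict_mem measurableSet_Icc] with i hi
      have hAi : 0 < A₀ i := ha.trans_le (hA₀a i hi)
      rw [hμEQ i, calc_pow hAi hSpos hθeq hqr]
    rw [lintegral_congr_ae hcongr,
      ← ofReal_integral_eq_lintegral_ofReal (intAr.const_mul _)]
    · rw [integral_const_mul, ← hS, ← Real.rpow_add_one hSpos.ne' (-θ),
        show -θ + 1 = 1 - θ by ring]
    · filter_upwards [ae_restrict_mem measurableSet_Icc] with i hi
      have hAi : 0 < A₀ i := ha.trans_le (hA₀a i hi)
      positivity
  rw [hEQval]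
  -- μ side
  set f : ℝ → ℝ := fun j => (A₀ j * μ j ^ c) ^ q with hf
  by_cases hI : (∫⁻ j in Icc (0:ℝ) n, ENNReal.ofReal (f j)) = ⊤
  · rw [hI]; exact le_top
  have hfmeas : Measurable f := by rw [hf]; measurability
  have hfnn : 0 ≤ᵐ[volume.restrict (Icc (0:ℝ) n)] f := by
    filter_upwards [ae_restrict_mem measurableSet_Icc] with i hi
    have hAi : 0 < A₀ i := ha.trans_le (hA₀a i hi)
    have : 0 ≤ A₀ i * μ i ^ c := mul_nonneg hAi.le (Real.rpow_nonneg (hμnn i hi) c)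
    exact Real.rpow_nonneg this q
  have hfint : IntegrableOn f (Icc (0:ℝ) n) :=
    ⟨hfmeas.aestronglyMeasurable,
      (hasFiniteIntegral_iff_ofReal hfnn).2 (lt_top_iff_ne_top.2 hI)⟩
  rw [← ofReal_integral_eq_lintegral_ofReal hfint hfnn]
  apply ENNReal.ofReal_le_ofReal
  -- real-valued comparison via tangent line
  have hμInt : IntegrableOn μ (Icc (0:ℝ) n) := by
    by_contra hcon
    rw [integral_undef hcon] at hμint
    exact one_ne_zero hμint.symm
  have hsub : IntegrableOn (fun j => μ j - A₀ j ^ r / S) (Icc (0:ℝ) n) := by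
    have := hμInt.sub (intAr.div_const S)
    exact this
  set h : ℝ → ℝ := fun j => S ^ (-θ) * A₀ j ^ r + θ * S ^ (1 - θ) * (μ j - A₀ j ^ r / S)
    with hh
  have hhint : IntegrableOn h (Icc (0:ℝ) n) :=
    (intAr.const_mul _).add (hsub.const_mul _)
  have hle : h ≤ᵐ[volume.restrict (Icc (0:ℝ) n)] f := by
    filter_upwards [ae_restrict_mem measurableSet_Icc, hμpos] with i hi hμi
    have hAi : 0 < A₀ i := ha.trans_le (hA₀a i hi)
    have hstar : 0 < A₀ i ^ r / S := div_pos (rpow_pos_of_pos hAi r) hSpos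
    have ht := tangent_neg hθneg hμi hstar
    have h2 := mul_le_mul_of_nonneg_left ht (Real.rpow_pos_of_pos hAi q).le
    have e1 : A₀ i ^ q * (A₀ i ^ r / S) ^ θ = S ^ (-θ) * A₀ i ^ r :=
      (calc_pow2 hAi hstar hθeq).symm.trans (calc_pow hAi hSpos hθeq hqr)
    have e2 : A₀ i ^ q * (A₀ i ^ r / S) ^ (θ - 1) = S ^ (1 - θ) :=
      calc_pow3 hAi hSpos hqr
    calc h i = A₀ i ^ q * ((A₀ i ^ r / S) ^ θ
          + θ * (A₀ i ^ r / S) ^ (θ - 1) * (μ i - A₀ i ^ r / S)) := by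
          simp only [hh]
          rw [← e1, ← e2]; ring
      _ ≤ A₀ i ^ q * μ i ^ θ := h2
      _ = f i := (calc_pow2 hAi hμi hθeq).symm
  calc S ^ (1 - θ) = ∫ j in Icc (0:ℝ) n, h j := by
        simp only [hh]
        rw [integral_add (intAr.const_mul _) (hsub.const_mul _),
          integral_const_mul, integral_const_mul,
          integral_sub hμInt (intAr.div_const S), integral_div, hμint, ← hS,
          div_self hSpos.ne']
        rw [← Real.rpow_add_one hSpos.ne' (-θ), show -θ + 1 = 1 - θ by ring]
        ring
    _ ≤ ∫ j in Icc (0:ℝ) n, f j := integral_mono_ae hhint hfint hle
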